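/- Let (S,n) be a regular local ring and (R,m) a Noetherian local ring. Suppose ξ : S → R is a local homomorphism of finite length, and ψ : S → S, φ : R → R are endomorphisms of finite length satisfying ξ ∘ ψ = φ ∘ ξ. Then the local entropy of φ is at most the local entropy of ψ: lim_{n→∞} (1/n)·log( length_R(R/φⁿ(m)R) ) ≤ lim_{n→∞} (1/n)·log( length_S(S/ψⁿ(n)S) ). -/

import Mathlib

open IsLocalRing

/-- The length of a module, defined as the Krull dimension of its lattice of submodules. -/
noncomputable def moduleLength (R M : Type*) [Ring R] [AddCommGroup M] [Module R M] : ℕ∞ :=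
  WithBot.unbotD 0 (Order.krullDim (Submodule R M))

/-- A Noetherian local ring is regular if its maximal ideal can be generated by
`dim S` elements, where `dim S` is the Krull dimension of `S`. -/
def IsRegularLocal (S : Type*) [CommRing S] [IsLocalRing S] [IsNoetherianRing S] : Prop :=
  ∃ s : Finset S, Ideal.span (s : Set S) = maximalIdeal S ∧
    (s.card : WithBot ℕ∞) = ringKrullDim S

set_option linter.unusedSectionVars false
set_option linter.unusedVariables false

section basic
variable {R M N : Type*} [Ring R] [AddCommGroup M] [Module R M] [AddCommGroup N] [Module R N]

lemma moduleLength_eq_height (R M : Type*) [Ring R] [AddCommGroup M] [Module R M] :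
    moduleLength R M = Order.height (⊤ : Submodule R M) := by
  have h : Order.krullDim (Submodule R M)
      = ((Order.height (⊤ : Submodule R M) : ℕ∞) : WithBot ℕ∞) := by
    rw [Order.krullDim_eq_iSup_height_of_nonempty]
    congr 1
    exact le_antisymm (iSup_le fun a => Order.height_mono le_top) (le_iSup _ ⊤)
  rw [moduleLength, h, WithBot.unbotD_coe]

lemma length_le_moduleLength (p : LTSeries (Submodule R M)) :
    (p.length : ℕ∞) ≤ moduleLength R M := by
  rw [moduleLength_eq_height]
  exact Order.length_le_height le_top

lemma moduleLength_le_of_forall {c : ℕ∞}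
    (h : ∀ p : LTSeries (Submodule R M), (p.length : ℕ∞) ≤ c) : moduleLength R M ≤ c := by
  rw [moduleLength_eq_height]; exact Order.height_le fun p _ => h p

lemma moduleLength_le_of_surjective (f : M →ₗ[R] N) (hf : Function.Surjective f) :
    moduleLength R N ≤ moduleLength R M := by
  rw [moduleLength_eq_height, moduleLength_eq_height]
  have hsm : StrictMono (Submodule.comap f) :=
    Monotone.strictMono_of_injective (fun _ _ h => Submodule.comap_mono h)
      (Submodule.comap_injective_of_surjective hf)
  simpa using Order.height_le_height_apply_of_strictMono _ hsm ⊤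

lemma moduleLength_eq_zero_of_subsingleton [Subsingleton M] : moduleLength R M = 0 := by
  rw [moduleLength_eq_height, Order.height_eq_zero]
  intro b _
  exact le_of_eq (Subsingleton.elim _ _)

lemma one_le_moduleLength [Nontrivial M] : 1 ≤ moduleLength R M := by
  rw [moduleLength_eq_height]
  have hne : (⊥ : Submodule R M) ≠ ⊤ := by
    obtain ⟨x, hx⟩ := exists_ne (0 : M)
    intro h
    exact hx (by simpa using (h ▸ Submodule.mem_top : x ∈ (⊥ : Submodule R M)))
  have hlt : (⊥ : Submodule R M) < ⊤ := lt_of_le_of_ne bot_le hne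
  have := Order.length_le_height_last (p := (RelSeries.singleton _ (⊥ : Submodule R M)).snoc ⊤ hlt)
  exact this

end basic

lemma height_add_one_le {α : Type*} [Preorder α] {a b : α} (h : a < b) :
    Order.height a + 1 ≤ Order.height b := by
  by_cases htop : Order.height a = ⊤
  · have hb : Order.height b = ⊤ := eq_top_iff.mpr (htop ▸ Order.height_mono h.le)
    simp [htop, hb]
  · exact (ENat.add_one_le_iff htop).mpr (Order.height_strictMono h (lt_top_iff_ne_top.mpr htop))

lemma chain_le_aux {R M : Type*} [Ring R] [AddCommGroup M] [Module R M] (N : Submodule R M) :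
    ∀ (n : ℕ) (p : LTSeries (Submodule R M)), p.length = n →
      (n : ℕ∞) ≤ Order.height (Submodule.comap N.subtype p.last)
        + Order.height (Submodule.map N.mkQ p.last) := by
  intro n
  induction n with
  | zero => intro p _; simp
  | succ n ih =>
    intro p hp
    have hlen : p.eraseLast.length = n := by simp [hp]
    have hrel : p.eraseLast.last < p.last := p.eraseLast_last_rel_last (by omega)
    have hIH := ih p.eraseLast hlen
    set x := p.eraseLast.last with hx
    set y := p.last with hy
    have hne : Submodule.comap N.subtype x < Submodule.comap N.subtype y
        ∨ Submodule.map N.mkQ x < Submodule.map N.mkQ y := by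
      by_contra hcon
      push_neg at hcon
      obtain ⟨h1, h2⟩ := hcon
      have e1 : Submodule.comap N.subtype x = Submodule.comap N.subtype y :=
        (lt_or_eq_of_le (Submodule.comap_mono hrel.le)).resolve_left h1
      have e2 : Submodule.map N.mkQ x = Submodule.map N.mkQ y :=
        (lt_or_eq_of_le (Submodule.map_mono hrel.le)).resolve_left h2
      have einf : N ⊓ x = N ⊓ y := by
        rw [← Submodule.map_comap_subtype, e1, Submodule.map_comap_subtype]
      have esup : N ⊔ x = N ⊔ y := by
        rw [← Submodule.comap_map_mkQ, e2, Submodule.comap_map_mkQ]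
      have : x = y := eq_of_le_of_inf_le_of_sup_le hrel.le
        (le_of_eq (by rw [inf_comm, ← einf, inf_comm]))
        (le_of_eq (by rw [sup_comm, ← esup, sup_comm]))
      exact hrel.ne this
    have cast1 : ((n + 1 : ℕ) : ℕ∞) = (n : ℕ∞) + 1 := by push_cast; ring
    rcases hne with hlt | hlt
    · calc ((n+1 : ℕ) : ℕ∞) = (n : ℕ∞) + 1 := cast1
        _ ≤ (Order.height (Submodule.comap N.subtype x)
              + Order.height (Submodule.map N.mkQ x)) + 1 := add_le_add_left hIH 1
        _ = (Order.height (Submodule.comap N.subtype x) + 1)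
              + Order.height (Submodule.map N.mkQ x) := add_right_comm _ _ _
        _ ≤ Order.height (Submodule.comap N.subtype y)
              + Order.height (Submodule.map N.mkQ y) :=
            add_le_add (height_add_one_le hlt)
              (Order.height_mono (Submodule.map_mono hrel.le))
    · calc ((n+1 : ℕ) : ℕ∞) = (n : ℕ∞) + 1 := cast1
        _ ≤ (Order.height (Submodule.comap N.subtype x)
              + Order.height (Submodule.map N.mkQ x)) + 1 := add_le_add_left hIH 1
        _ = Order.height (Submodule.comap N.subtype x)
              + (Order.height (Submodule.map N.mkQ x) + 1) := add_assoc _ _ _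
        _ ≤ Order.height (Submodule.comap N.subtype y)
              + Order.height (Submodule.map N.mkQ y) :=
            add_le_add (Order.height_mono (Submodule.comap_mono hrel.le))
              (height_add_one_le hlt)

lemma moduleLength_le_add {R M : Type*} [Ring R] [AddCommGroup M] [Module R M]
    (N : Submodule R M) :
    moduleLength R M ≤ moduleLength R N + moduleLength R (M ⧸ N) := by
  apply moduleLength_le_of_forall
  intro p
  refine (chain_le_aux N p.length p rfl).trans (add_le_add ?_ ?_)
  · rw [moduleLength_eq_height]; exact Order.height_mono le_top
  · rw [moduleLength_eq_height]; exact Order.height_mono le_top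

section ideals
variable {T : Type*} [CommRing T]

lemma moduleLength_quot_antitone {A B : Ideal T} (h : A ≤ B) :
    moduleLength T (T ⧸ B) ≤ moduleLength T (T ⧸ A) := by
  refine moduleLength_le_of_surjective
    (Submodule.mapQ A B LinearMap.id (by simpa using h)) ?_
  intro y
  obtain ⟨x, rfl⟩ := Submodule.mkQ_surjective B y
  exact ⟨Submodule.Quotient.mk x, rfl⟩

lemma map_mkQ_self_eq_bot (A : Ideal T) :
    Submodule.map (Submodule.mkQ A) (A : Submodule T T) = ⊥ := by
  refine le_bot_iff.mp (Submodule.map_le_iff_le_comap.mpr ?_)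
  rw [Submodule.comap_bot, Submodule.ker_mkQ]

lemma moduleLength_quot_le_step (K A : Ideal T) (y : T)
    (hy : ∀ s ∈ K, s * y ∈ A) :
    moduleLength T (T ⧸ A)
      ≤ moduleLength T (T ⧸ (A ⊔ Ideal.span {y})) + moduleLength T (T ⧸ K) := by
  set B : Ideal T := A ⊔ Ideal.span {y} with hB
  have hAB : A ≤ B := le_sup_left
  set N : Submodule T (T ⧸ A) := Submodule.map (Submodule.mkQ A) B with hN
  have h1 : moduleLength T (T ⧸ A) ≤ moduleLength T N + moduleLength T ((T ⧸ A) ⧸ N) :=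
    moduleLength_le_add N
  have h2 : moduleLength T ((T ⧸ A) ⧸ N) ≤ moduleLength T (T ⧸ B) :=
    moduleLength_le_of_surjective
      (Submodule.quotientQuotientEquivQuotient A B hAB).symm.toLinearMap
      (LinearEquiv.surjective _)
  have h3 : moduleLength T N ≤ moduleLength T (T ⧸ K) := by
    set g0 : T →ₗ[T] T ⧸ A := LinearMap.toSpanSingleton T (T ⧸ A) (Submodule.mkQ A y) with hg0
    have hker : (K : Submodule T T) ≤ LinearMap.ker g0 := by
      intro s hs
      have hval : g0 s = Submodule.mkQ A (s * y) := by
        rw [hg0, LinearMap.toSpanSingleton_apply, ← map_smul, smul_eq_mul]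
      have : Submodule.mkQ A (s * y) = 0 :=
        (Submodule.Quotient.mk_eq_zero A).mpr (hy s hs)
      simp [LinearMap.mem_ker, hval, this]
    set g : (T ⧸ K) →ₗ[T] T ⧸ A := Submodule.liftQ (K : Submodule T T) g0 hker with hg
    have hrange : LinearMap.range g = N := by
      rw [hg, Submodule.range_liftQ, hg0, ← LinearMap.span_singleton_eq_range, hN, hB,
        Submodule.map_sup]
      have hmapy : Submodule.map (Submodule.mkQ A) (Ideal.span {y} : Submodule T T)
          = Submodule.span T {Submodule.mkQ A y} := by
        rw [Ideal.span, Submodule.map_span, Set.image_singleton]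
      rw [map_mkQ_self_eq_bot, hmapy, bot_sup_eq]
    calc moduleLength T N = moduleLength T (LinearMap.range g) := by rw [hrange]
      _ ≤ moduleLength T (T ⧸ K) :=
        moduleLength_le_of_surjective g.rangeRestrict (LinearMap.surjective_rangeRestrict g)
  calc moduleLength T (T ⧸ A) ≤ moduleLength T N + moduleLength T ((T ⧸ A) ⧸ N) := h1
    _ ≤ moduleLength T (T ⧸ K) + moduleLength T (T ⧸ B) := add_le_add h3 h2
    _ = moduleLength T (T ⧸ B) + moduleLength T (T ⧸ K) := add_comm _ _

lemma moduleLength_quot_maximal_le_one (I : Ideal T) (hI : I.IsMaximal) :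
    moduleLength T (T ⧸ I) ≤ 1 := by
  have hdich : ∀ W : Submodule T (T ⧸ I), W = ⊥ ∨ W = ⊤ := by
    intro W
    have hle : I ≤ Submodule.comap (Submodule.mkQ I) W := by
      intro a ha
      have h0 : Submodule.mkQ I a = 0 := (Submodule.Quotient.mk_eq_zero I).mpr ha
      simp [Submodule.mem_comap, h0]
    have hWeq : Submodule.map (Submodule.mkQ I) (Submodule.comap (Submodule.mkQ I) W) = W :=
      Submodule.map_comap_eq_of_surjective (Submodule.mkQ_surjective I) W
    rcases eq_or_lt_of_le hle with h | h
    · left; rw [← hWeq, ← h, map_mkQ_self_eq_bot]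
    · right
      have : Submodule.comap (Submodule.mkQ I) W = ⊤ := (Ideal.isMaximal_def.mp hI).2 _ h
      rw [← hWeq, this, Submodule.map_top, Submodule.range_mkQ]
  apply moduleLength_le_of_forall
  intro p
  by_contra hcon
  push_neg at hcon
  have h2 : 2 ≤ p.length := by exact_mod_cast hcon
  have h01 : p ⟨0, by omega⟩ < p ⟨1, by omega⟩ := p.strictMono (by simp [Fin.lt_def])
  have h12 : p ⟨1, by omega⟩ < p ⟨2, by omega⟩ := p.strictMono (by simp [Fin.lt_def])
  rcases hdich (p ⟨1, by omega⟩) with h | h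
  · rw [h] at h01; exact not_lt_bot h01
  · rw [h] at h12; exact not_top_lt h12

end ideals

section fin
variable {T : Type*} [CommRing T] [IsLocalRing T]

lemma moduleLength_quot_top_eq_zero : moduleLength T (T ⧸ (⊤ : Ideal T)) = 0 :=
  have : Subsingleton (T ⧸ (⊤ : Ideal T)) :=
    Submodule.Quotient.subsingleton_iff.mpr rfl
  moduleLength_eq_zero_of_subsingleton

lemma finaux : ∀ (t : Finset T) (A : Ideal T),
    (∀ y ∈ t, ∀ s ∈ maximalIdeal T, s * y ∈ A) →
    moduleLength T (T ⧸ (A ⊔ Ideal.span (t : Set T))) ≠ ⊤ → moduleLength T (T ⧸ A) ≠ ⊤ := by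
  classical
  intro t
  induction t using Finset.induction_on with
  | empty =>
    intro A _ h
    have he : A ⊔ Ideal.span ((∅ : Finset T) : Set T) = A := by
      simp
    rwa [he] at h
  | @insert y t hy ih =>
    intro A hcond htop
    have h1 : moduleLength T (T ⧸ A)
        ≤ moduleLength T (T ⧸ (A ⊔ Ideal.span {y})) + moduleLength T (T ⧸ maximalIdeal T) :=
      moduleLength_quot_le_step _ _ _ (fun s hs => hcond y (Finset.mem_insert_self y t) s hs)
    have h2 : moduleLength T (T ⧸ ((A ⊔ Ideal.span {y}) ⊔ Ideal.span (t : Set T))) ≠ ⊤ := by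
      have he : (A ⊔ Ideal.span {y}) ⊔ Ideal.span (t : Set T)
          = A ⊔ Ideal.span ((insert y t : Finset T) : Set T) := by
        rw [Finset.coe_insert, Ideal.span_insert, sup_assoc]
      rw [he]; exact htop
    have h3 : moduleLength T (T ⧸ (A ⊔ Ideal.span {y})) ≠ ⊤ :=
      ih (A ⊔ Ideal.span {y})
        (fun z hz s hs => Ideal.mem_sup_left (hcond z (Finset.mem_insert_of_mem hz) s hs)) h2
    have h4 : moduleLength T (T ⧸ maximalIdeal T) ≠ ⊤ :=
      ne_top_of_le_ne_top (by simp) (moduleLength_quot_maximal_le_one _ (maximalIdeal.isMaximal T))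
    exact ne_top_of_le_ne_top (WithTop.add_ne_top.mpr ⟨h3, h4⟩) h1

lemma moduleLength_quot_ne_top [IsNoetherianRing T] :
    ∀ (k : ℕ) (A : Ideal T), maximalIdeal T ^ k ≤ A → moduleLength T (T ⧸ A) ≠ ⊤ := by
  intro k
  induction k with
  | zero =>
    intro A hA
    have : A = ⊤ := eq_top_iff.mpr (by simpa using hA)
    rw [this, moduleLength_quot_top_eq_zero]
    simp
  | succ k ih =>
    intro A hA
    obtain ⟨t, ht⟩ : (maximalIdeal T ^ k).FG := IsNoetherian.noetherian _
    refine finaux t A ?_ ?_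
    · intro y hyt s hs
      have hy : y ∈ maximalIdeal T ^ k := ht ▸ Ideal.subset_span hyt
      have : s * y ∈ maximalIdeal T * maximalIdeal T ^ k := Ideal.mul_mem_mul hs hy
      rw [← pow_succ'] at this
      exact hA this
    · have : A ⊔ Ideal.span (t : Set T) = A ⊔ maximalIdeal T ^ k := by
        rw [← ht]
      rw [this]
      exact ih _ le_sup_right

lemma exists_almost_killed : ∀ (k : ℕ) (I : Ideal T), maximalIdeal T ^ k ≤ I → I ≠ ⊤ →
    ∃ x, x ∉ I ∧ ∀ s ∈ maximalIdeal T, s * x ∈ I := by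
  intro k
  induction k with
  | zero => intro I hI hne; exact absurd (eq_top_iff.mpr (by simpa using hI)) hne
  | succ k ih =>
    intro I hI hne
    by_cases hk : maximalIdeal T ^ k ≤ I
    · exact ih I hk hne
    · obtain ⟨x, hx1, hx2⟩ := SetLike.not_le_iff_exists.mp hk
      refine ⟨x, hx2, fun s hs => ?_⟩
      have : s * x ∈ maximalIdeal T * maximalIdeal T ^ k := Ideal.mul_mem_mul hs hx1
      rw [← pow_succ'] at this
      exact hI this

end fin

lemma radical_map_radical {A B : Type*} [CommRing A] [CommRing B] (f : A →+* B) (I : Ideal A) :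
    (Ideal.map f I.radical).radical = (Ideal.map f I).radical := by
  apply le_antisymm
  · have h : Ideal.map f I.radical ≤ (Ideal.map f I).radical := by
      rw [Ideal.map_le_iff_le_comap]
      intro x hx
      obtain ⟨k, hk⟩ := Ideal.mem_radical_iff.mp hx
      exact Ideal.mem_comap.mpr (Ideal.mem_radical_iff.mpr
        ⟨k, by rw [← map_pow]; exact Ideal.mem_map_of_mem f hk⟩)
    calc (Ideal.map f I.radical).radical ≤ (Ideal.map f I).radical.radical :=
          Ideal.radical_mono h
      _ = (Ideal.map f I).radical := Ideal.radical_idem _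
  · exact Ideal.radical_mono (Ideal.map_mono Ideal.le_radical)

lemma rad_iter {T : Type*} [CommRing T] [IsLocalRing T] (ψ : T →+* T)
    (hψ : (Ideal.map ψ (maximalIdeal T)).radical = maximalIdeal T) (t : ℕ) :
    (Ideal.map (ψ ^ t) (maximalIdeal T)).radical = maximalIdeal T := by
  induction t with
  | zero =>
    rw [pow_zero]
    have h1 : Ideal.map (1 : T →+* T) (maximalIdeal T) = maximalIdeal T := by
      have : (1 : T →+* T) = RingHom.id T := rfl
      rw [this, Ideal.map_id]
    rw [h1]
    exact (maximalIdeal.isMaximal T).isPrime.radical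
  | succ t ih =>
    have hcomp : ψ ^ (t + 1) = (ψ ^ t).comp ψ := by rw [pow_succ]; rfl
    have hmm : Ideal.map (ψ ^ (t+1)) (maximalIdeal T)
        = Ideal.map (ψ ^ t) (Ideal.map ψ (maximalIdeal T)) := by
      rw [hcomp, ← Ideal.map_map]
    calc (Ideal.map (ψ ^ (t+1)) (maximalIdeal T)).radical
        = (Ideal.map (ψ ^ t) (Ideal.map ψ (maximalIdeal T))).radical := by rw [hmm]
      _ = (Ideal.map (ψ ^ t) (Ideal.map ψ (maximalIdeal T)).radical).radical :=
          (radical_map_radical _ _).symm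
      _ = (Ideal.map (ψ ^ t) (maximalIdeal T)).radical := by rw [hψ]
      _ = maximalIdeal T := ih

lemma comm_iter {S R : Type*} [CommRing S] [CommRing R] (ξ : S →+* R) (ψ : S →+* S) (φ : R →+* R)
    (hcomm : ξ.comp ψ = φ.comp ξ) (t : ℕ) : ξ.comp (ψ ^ t) = (φ ^ t).comp ξ := by
  induction t with
  | zero => rfl
  | succ t ih =>
    have h1 : ψ ^ (t + 1) = (ψ ^ t).comp ψ := by rw [pow_succ]; rfl
    have h2 : φ ^ (t + 1) = (φ ^ t).comp φ := by rw [pow_succ]; rfl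
    rw [h1, h2, ← RingHom.comp_assoc, ih, RingHom.comp_assoc, hcomm, ← RingHom.comp_assoc]

lemma enat_le_of_add_one_le {a : ℕ∞} {l : ℕ} (h : a + 1 ≤ (l : ℕ∞) + 1) : a ≤ l := by
  have h1 : ((1:ℕ∞)) ≠ ⊤ := by simp
  exact (WithTop.add_le_add_iff_right h1).mp h

lemma moduleLength_quot_map_le {S R : Type*} [CommRing S] [CommRing R]
    [IsNoetherianRing S] [IsLocalRing S] (ξ : S →+* R) :
    ∀ (l : ℕ) (I : Ideal S), maximalIdeal S ≤ I.radical → moduleLength S (S ⧸ I) ≤ (l : ℕ∞) →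
      moduleLength R (R ⧸ Ideal.map ξ I)
        ≤ (l : ℕ∞) * moduleLength R (R ⧸ Ideal.map ξ (maximalIdeal S)) := by
  intro l
  induction l with
  | zero =>
    intro I _ hlen
    have hI : I = ⊤ := by
      by_contra hne
      have : Nontrivial (S ⧸ I) := by
        rw [← not_subsingleton_iff_nontrivial]
        intro hs
        exact hne (Submodule.Quotient.subsingleton_iff.mp hs)
      have h1 : (1 : ℕ∞) ≤ moduleLength S (S ⧸ I) := one_le_moduleLength
      have := h1.trans hlen
      simp at this
    have : Ideal.map ξ I = ⊤ := by rw [hI, Ideal.map_top]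
    have hsub : Subsingleton (R ⧸ Ideal.map ξ I) :=
      Submodule.Quotient.subsingleton_iff.mpr this
    rw [moduleLength_eq_zero_of_subsingleton]
    simp
  | succ l ih =>
    intro I hrad hlen
    by_cases hI : I = ⊤
    · have : Ideal.map ξ I = ⊤ := by rw [hI, Ideal.map_top]
      have hsub : Subsingleton (R ⧸ Ideal.map ξ I) :=
        Submodule.Quotient.subsingleton_iff.mpr this
      rw [moduleLength_eq_zero_of_subsingleton]
      simp
    · obtain ⟨k, hk⟩ := Ideal.exists_pow_le_of_le_radical_of_fg hrad (IsNoetherian.noetherian _)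
      obtain ⟨x, hxI, hxkill⟩ := exists_almost_killed k I hk hI
      set J : Ideal S := I ⊔ Ideal.span {x} with hJ
      have hIJ : I < J := by
        refine lt_of_le_of_ne le_sup_left (fun h => hxI ?_)
        rw [h, hJ]
        exact Ideal.mem_sup_right (Ideal.subset_span rfl)
      -- length drop
      have hdrop : moduleLength S (S ⧸ J) + 1 ≤ moduleLength S (S ⧸ I) := by
        rcases eq_or_ne (moduleLength S (S ⧸ J)) ⊤ with htop | htop
        · exfalso
          have := moduleLength_quot_antitone hIJ.le
          rw [htop] at this
          have : moduleLength S (S ⧸ I) = ⊤ := eq_top_iff.mpr this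
          rw [this] at hlen
          have h2 : ((l:ℕ∞) + 1) = ⊤ := top_le_iff.mp hlen
          have h3 : ((l:ℕ∞) + 1) ≠ ⊤ := by
            have : ((l:ℕ∞) + 1) = ((l+1 : ℕ) : ℕ∞) := by push_cast; ring
            rw [this]
            exact ENat.coe_ne_top _
          exact h3 h2
        · set n : ℕ := (moduleLength S (S ⧸ J)).toNat with hn'
          have hn : moduleLength S (S ⧸ J) = (n : ℕ∞) := (ENat.coe_toNat htop).symm
          set g : (S ⧸ I) →ₗ[S] S ⧸ J := Submodule.mapQ I J LinearMap.id (by simpa using hIJ.le)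
            with hg
          have hgs : Function.Surjective g := by
            intro z
            obtain ⟨w, rfl⟩ := Submodule.mkQ_surjective J z
            exact ⟨Submodule.Quotient.mk w, rfl⟩
          have hsm : StrictMono (Submodule.comap g) :=
            Monotone.strictMono_of_injective (fun _ _ h => Submodule.comap_mono h)
              (Submodule.comap_injective_of_surjective hgs)
          have hht : Order.height (⊤ : Submodule S (S ⧸ J)) = (n : ℕ∞) := by
            rw [← moduleLength_eq_height, hn]
          obtain ⟨p, hlast, hplen⟩ := Order.exists_series_of_height_eq_coe _ hht
          set q := p.map (Submodule.comap g) hsm with hq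
          have hqhead : (⊥ : Submodule S (S ⧸ I)) < q.head := by
            refine lt_of_le_of_ne bot_le (fun h => ?_)
            have hz : (Submodule.Quotient.mk x : S ⧸ I) ∈ q.head := by
              have hqh : q.head = Submodule.comap g p.head := by simp [hq]
              rw [hqh, Submodule.mem_comap]
              have hzero : g (Submodule.Quotient.mk x : S ⧸ I) = 0 := by
                have : (Submodule.Quotient.mk x : S ⧸ J) = 0 :=
                  (Submodule.Quotient.mk_eq_zero J).mpr
                    (Ideal.mem_sup_right (Ideal.subset_span rfl))
                simpa [hg, Submodule.mapQ_apply] using this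
              rw [hzero]
              exact zero_mem _
            rw [← h] at hz
            have : (Submodule.Quotient.mk x : S ⧸ I) = 0 := by simpa using hz
            exact hxI ((Submodule.Quotient.mk_eq_zero I).mp this)
          set q' := q.cons ⊥ hqhead with hq'
          have hlen' : q'.length = n + 1 := by
            simp [hq', hq, RelSeries.cons, hplen]
          have hfin : ((n + 1 : ℕ) : ℕ∞) ≤ Order.height (⊤ : Submodule S (S ⧸ I)) := by
            have h1 := Order.length_le_height_last (p := q')
            rw [hlen'] at h1
            exact h1.trans (Order.height_mono le_top)
          rw [← moduleLength_eq_height] at hfin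
          rw [hn]
          exact le_trans (by push_cast; exact le_refl _) hfin
      have hJlen : moduleLength S (S ⧸ J) ≤ (l : ℕ∞) := by
        apply enat_le_of_add_one_le
        refine hdrop.trans (hlen.trans ?_)
        push_cast
        exact le_refl _
      have hJrad : maximalIdeal S ≤ J.radical := hrad.trans (Ideal.radical_mono le_sup_left)
      have hIH := ih J hJrad hJlen
      -- step
      have hmapJ : Ideal.map ξ J = Ideal.map ξ I ⊔ Ideal.span {ξ x} := by
        rw [hJ, Ideal.map_sup, Ideal.map_span, Set.image_singleton]
      have hstep : moduleLength R (R ⧸ Ideal.map ξ I)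
          ≤ moduleLength R (R ⧸ Ideal.map ξ J)
            + moduleLength R (R ⧸ Ideal.map ξ (maximalIdeal S)) := by
        have hcond : ∀ s ∈ Ideal.map ξ (maximalIdeal S), s * ξ x ∈ Ideal.map ξ I := by
          have hcol : Ideal.map ξ (maximalIdeal S)
              ≤ Submodule.colon (Ideal.map ξ I) {ξ x} := by
            rw [Ideal.map_le_iff_le_comap]
            intro s hs
            rw [Ideal.mem_comap, Submodule.mem_colon_singleton, smul_eq_mul, ← map_mul]
            exact Ideal.mem_map_of_mem ξ (hxkill s hs)
          intro s hs
          have := hcol hs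
          rw [Submodule.mem_colon_singleton] at this
          simpa [smul_eq_mul] using this
        have := moduleLength_quot_le_step (Ideal.map ξ (maximalIdeal S)) (Ideal.map ξ I)
          (ξ x) hcond
        rwa [← hmapJ] at this
      calc moduleLength R (R ⧸ Ideal.map ξ I)
          ≤ moduleLength R (R ⧸ Ideal.map ξ J)
            + moduleLength R (R ⧸ Ideal.map ξ (maximalIdeal S)) := hstep
        _ ≤ (l : ℕ∞) * moduleLength R (R ⧸ Ideal.map ξ (maximalIdeal S))
            + moduleLength R (R ⧸ Ideal.map ξ (maximalIdeal S)) := by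
            exact add_le_add_left hIH _
        _ = ((l : ℕ∞) + 1) * moduleLength R (R ⧸ Ideal.map ξ (maximalIdeal S)) := by
            rw [add_one_mul]
        _ = ((l + 1 : ℕ) : ℕ∞) * moduleLength R (R ⧸ Ideal.map ξ (maximalIdeal S)) := by
            push_cast; ring_nf

/-- Let `(S,n)` be a regular local ring, `(R,m)` a Noetherian local
ring, `ξ : S → R` a local homomorphism of finite length, and `ψ : S → S`, `φ : R → R`
endomorphisms of finite length with `ξ ∘ ψ = φ ∘ ξ`. Then the local entropy of `φ` is at
most the local entropy of `ψ`. -/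
theorem local_entropy_le_of_intertwined {S R : Type*} [CommRing S] [CommRing R]
    [IsNoetherianRing S] [IsNoetherianRing R] [IsLocalRing S] [IsLocalRing R]
    (hreg : IsRegularLocal S)
    (ξ : S →+* R) [IsLocalHom ξ]
    (hξ : (Ideal.map ξ (maximalIdeal S)).radical = maximalIdeal R)
    (ψ : S →+* S) [IsLocalHom ψ]
    (hψ : (Ideal.map ψ (maximalIdeal S)).radical = maximalIdeal S)
    (φ : R →+* R) [IsLocalHom φ]
    (hφ : (Ideal.map φ (maximalIdeal R)).radical = maximalIdeal R)
    (hcomm : ξ.comp ψ = φ.comp ξ)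
    (a b : ℝ)
    (ha : Filter.Tendsto
      (fun n : ℕ => (1 / n : ℝ) *
        Real.log ((moduleLength R (R ⧸ Ideal.map (φ ^ n) (maximalIdeal R))).toNat))
      Filter.atTop (nhds a))
    (hb : Filter.Tendsto
      (fun n : ℕ => (1 / n : ℝ) *
        Real.log ((moduleLength S (S ⧸ Ideal.map (ψ ^ n) (maximalIdeal S))).toNat))
      Filter.atTop (nhds b)) :
    a ≤ b := by
  classical
  set C : ℕ∞ := moduleLength R (R ⧸ Ideal.map ξ (maximalIdeal S)) with hC
  have hξle : Ideal.map ξ (maximalIdeal S) ≤ maximalIdeal R := hξ ▸ Ideal.le_radical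
  have hCtop : C ≠ ⊤ := by
    obtain ⟨k, hk⟩ := Ideal.exists_pow_le_of_le_radical_of_fg (le_of_eq hξ.symm)
      (IsNoetherian.noetherian _)
    exact moduleLength_quot_ne_top k _ hk
  set c : ℕ := max C.toNat 1 with hc
  have hCc : C ≤ (c : ℕ∞) := by
    rw [← ENat.coe_toNat hCtop]
    exact Nat.cast_le.mpr (le_max_left _ _)
  have hc1 : 1 ≤ c := le_max_right _ _
  -- per-iterate data
  set Mt : ℕ → ℕ := fun t => (moduleLength S (S ⧸ Ideal.map (ψ ^ t) (maximalIdeal S))).toNat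
    with hMt
  set Lt : ℕ → ℕ := fun t => (moduleLength R (R ⧸ Ideal.map (φ ^ t) (maximalIdeal R))).toNat
    with hLt
  have key : ∀ t : ℕ, 1 ≤ Mt t ∧ 1 ≤ Lt t ∧ Lt t ≤ Mt t * c := by
    intro t
    have hradS : (Ideal.map (ψ ^ t) (maximalIdeal S)).radical = maximalIdeal S :=
      rad_iter ψ hψ t
    have hradR : (Ideal.map (φ ^ t) (maximalIdeal R)).radical = maximalIdeal R :=
      rad_iter φ hφ t
    set It : Ideal S := Ideal.map (ψ ^ t) (maximalIdeal S) with hIt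
    set mt : Ideal R := Ideal.map (φ ^ t) (maximalIdeal R) with hmt
    have hItle : It ≤ maximalIdeal S := hradS ▸ Ideal.le_radical
    have hmtle : mt ≤ maximalIdeal R := hradR ▸ Ideal.le_radical
    have hItne : It ≠ ⊤ := fun h =>
      (maximalIdeal.isMaximal S).ne_top (top_le_iff.mp (h ▸ hItle))
    have hmtne : mt ≠ ⊤ := fun h =>
      (maximalIdeal.isMaximal R).ne_top (top_le_iff.mp (h ▸ hmtle))
    have hMfin : moduleLength S (S ⧸ It) ≠ ⊤ := by
      obtain ⟨k, hk⟩ := Ideal.exists_pow_le_of_le_radical_of_fg (le_of_eq hradS.symm)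
        (IsNoetherian.noetherian _)
      exact moduleLength_quot_ne_top k _ hk
    have hMnontriv : Nontrivial (S ⧸ It) := by
      rw [← not_subsingleton_iff_nontrivial]
      intro hs
      exact hItne (Submodule.Quotient.subsingleton_iff.mp hs)
    have hM1 : 1 ≤ Mt t := by
      rw [Nat.one_le_iff_ne_zero]
      intro h0
      rcases ENat.toNat_eq_zero.mp h0 with h | h
      · have := @one_le_moduleLength S (S ⧸ It) _ _ _ hMnontriv
        rw [h] at this
        simp at this
      · exact hMfin h
    -- the chain of inequalities
    have hmap1 : Ideal.map ξ It ≤ mt := by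
      have e1 : Ideal.map ξ It = Ideal.map (ξ.comp (ψ ^ t)) (maximalIdeal S) := by
        rw [hIt, Ideal.map_map]
      have e2 : Ideal.map ((φ ^ t).comp ξ) (maximalIdeal S)
          = Ideal.map (φ ^ t) (Ideal.map ξ (maximalIdeal S)) := by
        rw [Ideal.map_map]
      rw [e1, comm_iter ξ ψ φ hcomm t, e2, hmt]
      exact Ideal.map_mono hξle
    have hkey : moduleLength R (R ⧸ mt) ≤ (Mt t : ℕ∞) * C := by
      refine (moduleLength_quot_antitone hmap1).trans ?_
      refine moduleLength_quot_map_le ξ (Mt t) It (le_of_eq hradS.symm) ?_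
      rw [hMt]
      simp only
      rw [ENat.coe_toNat hMfin]
    have hkey2 : moduleLength R (R ⧸ mt) ≤ ((Mt t * c : ℕ) : ℕ∞) := by
      refine hkey.trans ?_
      push_cast
      exact mul_le_mul_right hCc _
    have hLfin : moduleLength R (R ⧸ mt) ≠ ⊤ :=
      ne_top_of_le_ne_top (by exact_mod_cast ENat.coe_ne_top (Mt t * c)) hkey2
    have hLnontriv : Nontrivial (R ⧸ mt) := by
      rw [← not_subsingleton_iff_nontrivial]
      intro hs
      exact hmtne (Submodule.Quotient.subsingleton_iff.mp hs)
    have hL1 : 1 ≤ Lt t := by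
      rw [Nat.one_le_iff_ne_zero]
      intro h0
      rcases ENat.toNat_eq_zero.mp h0 with h | h
      · have := @one_le_moduleLength R (R ⧸ mt) _ _ _ hLnontriv
        rw [h] at this
        simp at this
      · exact hLfin h
    have hLM : Lt t ≤ Mt t * c := by
      have := ENat.toNat_le_toNat hkey2 (ENat.coe_ne_top _)
      rwa [ENat.toNat_coe] at this
    exact ⟨hM1, hL1, hLM⟩
  -- analysis
  have hc0 : Filter.Tendsto (fun t : ℕ => (1 / t : ℝ) * Real.log c)
      Filter.atTop (nhds 0) := by
    simpa using tendsto_one_div_atTop_nhds_zero_nat.mul_const (Real.log c)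
  have hsum : Filter.Tendsto
      (fun t : ℕ => (1 / t : ℝ) * Real.log (Mt t) + (1 / t : ℝ) * Real.log c)
      Filter.atTop (nhds b) := by
    simpa using hb.add hc0
  refine le_of_tendsto_of_tendsto' ha hsum ?_
  intro t
  obtain ⟨hM1, hL1, hLM⟩ := key t
  have hlog : Real.log (Lt t) ≤ Real.log (Mt t) + Real.log c := by
    have hmul : Real.log ((Mt t : ℝ) * c) = Real.log (Mt t) + Real.log c :=
      Real.log_mul (by exact_mod_cast Nat.one_le_iff_ne_zero.mp hM1)
        (by exact_mod_cast Nat.one_le_iff_ne_zero.mp hc1)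
    rw [← hmul]
    refine Real.log_le_log (by exact_mod_cast hL1) ?_
    exact_mod_cast hLM
  calc (1 / t : ℝ) * Real.log (Lt t)
      ≤ (1 / t : ℝ) * (Real.log (Mt t) + Real.log c) :=
        mul_le_mul_of_nonneg_left hlog (by positivity)
    _ = (1 / t : ℝ) * Real.log (Mt t) + (1 / t : ℝ) * Real.log c := mul_add _ _ _
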